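/- Let Z_1 ≤ Z_2 ≤ … ≤ Z_n be real numbers and u ∈ ℝ^n. Define ũ ∈ ℝ^n by ũ_i = max_{j∈[n]: Z_j ≤ Z_i} min_{k∈[n]: Z_k ≥ Z_i} Med((u_ℓ)_{ℓ: Z_j ≤ Z_ℓ ≤ Z_k}). Then ũ satisfies (Z_i − Z_j)(ũ_i − ũ_j) ≥ 0 for all i, j, so there exist m ∈ [n+1], integers 1 = n_1 < n_2 < … < n_m = n+1 and reals r_1 < r_2 < … < r_{m−1} with ũ_i = r_t for n_t ≤ i < n_{t+1}. For this representation: (a) r_t = Med((u_ℓ)_{n_t ≤ ℓ ≤ n_{t+1}−1}) for each t ∈ [m−1]; and (b) for each t ∈ [m−1] and each i ∈ {n_t, n_t+1, …, n_{t+1}−1}, Med((u_ℓ)_{ℓ: Z_{n_t} ≤ Z_ℓ ≤ Z_i}) ≥ r_t ≥ Med((u_ℓ)_{ℓ: Z_i ≤ Z_ℓ ≤ Z_{n_{t+1}−1}}). -/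

import Mathlib

noncomputable section

/-- The median of a finite tuple of reals (given as a list): `a_{(k+1)}` if the length is
`2k+1`, and `(a_{(k)} + a_{(k+1)})/2` if the length is `2k`. -/
def med (l : List ℝ) : ℝ :=
  let s := Multiset.sort (l : Multiset ℝ) (· ≤ ·)
  if l.length % 2 = 1 then s.getD (l.length / 2) 0
  else (s.getD (l.length / 2 - 1) 0 + s.getD (l.length / 2) 0) / 2

/-- `Med((u_ℓ)_{ℓ : lo ≤ Z_ℓ ≤ hi})`, the median of the values `u_ℓ` over indices whose
`Z`-value lies in `[lo, hi]`. -/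
def subMed (n : ℕ) (Z u : Fin n → ℝ) (lo hi : ℝ) : ℝ :=
  med (((List.finRange n).filter fun ℓ => decide (lo ≤ Z ℓ ∧ Z ℓ ≤ hi)).map u)

/-- The isotonic (ℓ₁-type) median projection
`ũ_i = max_{j : Z_j ≤ Z_i} min_{k : Z_k ≥ Z_i} Med((u_ℓ)_{ℓ : Z_j ≤ Z_ℓ ≤ Z_k})`. -/
def isoMedProj (n : ℕ) (Z u : Fin n → ℝ) (i : Fin n) : ℝ :=
  (Finset.univ.filter fun j => Z j ≤ Z i).sup'
    ⟨i, by simp⟩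
    fun j =>
      (Finset.univ.filter fun k => Z i ≤ Z k).inf'
        ⟨i, by simp⟩
        fun k => subMed n Z u (Z j) (Z k)

namespace MedAux

/-- median of a multiset -/
noncomputable def medM (s : Multiset ℝ) : ℝ :=
  let w := Multiset.sort s (· ≤ ·)
  if Multiset.card s % 2 = 1 then w.getD (Multiset.card s / 2) 0
  else (w.getD (Multiset.card s / 2 - 1) 0 + w.getD (Multiset.card s / 2) 0) / 2

lemma med_eq_medM (l : List ℝ) : med l = medM (↑l) := by
  simp [med, medM]


lemma sorted_getD_mono {w : List ℝ} (hw : w.Pairwise (· ≤ ·)) {i j : ℕ}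
    (hij : i ≤ j) (hj : j < w.length) : w.getD i 0 ≤ w.getD j 0 := by
  rcases eq_or_lt_of_le hij with rfl | hlt
  · exact le_refl _
  · rw [List.getD_eq_getElem _ _ (lt_trans hlt hj), List.getD_eq_getElem _ _ hj]
    exact List.pairwise_iff_getElem.mp hw i j _ _ hlt

/-- count of elements strictly above M -/
def cntA (M : ℝ) (w : List ℝ) : ℕ := w.countP (fun x => decide (M < x))

lemma cntA_le {w : List ℝ} (hw : w.Pairwise (· ≤ ·)) {M : ℝ} {j : ℕ}
    (hj : j < w.length) (h : w.getD j 0 ≤ M) : cntA M w + j + 1 ≤ w.length := by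
  have hsplit := List.take_append_drop (j+1) w
  have hcnt : cntA M w = cntA M (w.take (j+1)) + cntA M (w.drop (j+1)) := by
    conv_lhs => rw [← hsplit]
    exact List.countP_append
  have h1 : cntA M (w.take (j+1)) = 0 := by
    rw [cntA, List.countP_eq_zero]
    intro a ha
    obtain ⟨i, hi, rfl⟩ := List.mem_iff_getElem.mp ha
    have hi' : i < w.length := lt_of_lt_of_le hi (by simp [List.length_take])
    rw [List.getElem_take]
    have hij : i ≤ j := by
      have := hi; simp [List.length_take] at this; omega
    have : w[i] ≤ M := by
      calc w[i] = w.getD i 0 := (List.getD_eq_getElem _ _ hi').symm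
        _ ≤ w.getD j 0 := sorted_getD_mono hw hij hj
        _ ≤ M := h
    simpa using not_lt.mpr this
  have h2 : cntA M (w.drop (j+1)) ≤ w.length - (j+1) := by
    have := List.countP_le_length (p := fun x => decide (M < x)) (l := w.drop (j+1))
    simpa [cntA, List.length_drop] using this
  omega

lemma le_cntA {w : List ℝ} (hw : w.Pairwise (· ≤ ·)) {M : ℝ} {j : ℕ}
    (hj : j < w.length) (h : M < w.getD j 0) : w.length - j ≤ cntA M w := by
  have hsplit := List.take_append_drop j w
  have hcnt : cntA M w = cntA M (w.take j) + cntA M (w.drop j) := by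
    conv_lhs => rw [← hsplit]
    exact List.countP_append
  have h2 : cntA M (w.drop j) = w.length - j := by
    rw [cntA]
    rw [show w.length - j = (w.drop j).length by simp [List.length_drop]]
    rw [List.countP_eq_length]
    intro a ha
    obtain ⟨i, hi, rfl⟩ := List.mem_iff_getElem.mp ha
    rw [List.getElem_drop]
    have hji : j ≤ j + i := Nat.le_add_right _ _
    have hlen : j + i < w.length := by simp [List.length_drop] at hi; omega
    have : w.getD j 0 ≤ w.getD (j+i) 0 := sorted_getD_mono hw hji hlen
    rw [List.getD_eq_getElem _ _ hlen] at this
    simpa using lt_of_lt_of_le h this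
  omega

lemma getD_le_of_cnt {w : List ℝ} (hw : w.Pairwise (· ≤ ·)) {M : ℝ} {j : ℕ}
    (hj : j < w.length) (h : cntA M w + j + 1 ≤ w.length) : w.getD j 0 ≤ M := by
  by_contra hc
  push_neg at hc
  have := le_cntA hw hj hc
  omega

lemma lt_getD_of_cnt {w : List ℝ} (hw : w.Pairwise (· ≤ ·)) {M : ℝ} {j : ℕ}
    (hj : j < w.length) (h : w.length ≤ cntA M w + j) : M < w.getD j 0 := by
  by_contra hc
  push_neg at hc
  have := cntA_le hw hj hc
  omega

lemma min_above {w : List ℝ} (hw : w.Pairwise (· ≤ ·)) {M : ℝ} {e : ℝ}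
    (he : e ∈ w) (hMe : M < e) : w.getD (w.length - cntA M w) 0 ≤ e := by
  obtain ⟨j, hj, rfl⟩ := List.mem_iff_getElem.mp he
  have h1 : w.length - j ≤ cntA M w := by
    apply le_cntA hw hj
    rwa [List.getD_eq_getElem _ _ hj]
  have h2 : w.length - cntA M w ≤ j := by omega
  rw [← List.getD_eq_getElem _ _ hj]
  exact sorted_getD_mono hw h2 hj

lemma getD_mem {w : List ℝ} {j : ℕ} (hj : j < w.length) : w.getD j 0 ∈ w := by
  rw [List.getD_eq_getElem _ _ hj]; exact List.getElem_mem hj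



/-- sorted list of a multiset -/
noncomputable abbrev srt (s : Multiset ℝ) : List ℝ := Multiset.sort s (· ≤ ·)

lemma srt_sorted (s : Multiset ℝ) : (srt s).Pairwise (· ≤ ·) := Multiset.pairwise_sort s _
lemma srt_length (s : Multiset ℝ) : (srt s).length = Multiset.card s := Multiset.length_sort _

/-- count above at multiset level -/
noncomputable def cnt (M : ℝ) (s : Multiset ℝ) : ℕ := Multiset.card (s.filter (fun x => M < x))

lemma cnt_eq (M : ℝ) (s : Multiset ℝ) : cnt M s = cntA M (srt s) := by
  have h := Multiset.coe_countP (fun x => M < x) (srt s)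
  rw [Multiset.sort_eq] at h
  rw [cnt, ← Multiset.countP_eq_card_filter, h]
  rfl

noncomputable def Lo (s : Multiset ℝ) : ℝ := (srt s).getD ((Multiset.card s - 1)/2) 0
noncomputable def Hi (s : Multiset ℝ) : ℝ := (srt s).getD (Multiset.card s / 2) 0

lemma medM_eq {s : Multiset ℝ} (hs : s ≠ 0) : medM s = (Lo s + Hi s) / 2 := by
  have hc : Multiset.card s ≠ 0 := by simpa using hs
  rw [Lo, Hi]
  simp only [medM]
  split_ifs with h
  · have heq : (Multiset.card s - 1) / 2 = Multiset.card s / 2 := by omega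
    rw [heq]; ring
  · have h2 : Multiset.card s % 2 = 0 := by omega
    have heq : (Multiset.card s - 1) / 2 = Multiset.card s / 2 - 1 := by omega
    rw [heq]

lemma Lo_le_Hi {s : Multiset ℝ} (hs : s ≠ 0) : Lo s ≤ Hi s := by
  have hc : Multiset.card s ≠ 0 := by simpa using hs
  apply sorted_getD_mono (srt_sorted s) (by omega)
  rw [srt_length]; omega

lemma Lo_le_medM {s : Multiset ℝ} (hs : s ≠ 0) : Lo s ≤ medM s := by
  rw [medM_eq hs]; have := Lo_le_Hi hs; linarith

lemma medM_le_Hi {s : Multiset ℝ} (hs : s ≠ 0) : medM s ≤ Hi s := by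
  rw [medM_eq hs]; have := Lo_le_Hi hs; linarith

lemma cnt_mono {s : Multiset ℝ} {M M' : ℝ} (h : M ≤ M') : cnt M' s ≤ cnt M s := by
  rw [cnt, cnt]
  apply Multiset.card_le_card
  have : s.filter (fun x => M' < x) = (s.filter (fun x => M < x)).filter (fun x => M' < x) := by
    rw [Multiset.filter_filter]
    apply Multiset.filter_congr
    intro x _
    constructor
    · intro hx; exact ⟨hx, lt_of_le_of_lt h hx⟩
    · intro hx; exact hx.1
  rw [this]
  exact Multiset.filter_le _ _

lemma two_cnt_le {s : Multiset ℝ} (hs : s ≠ 0) {M : ℝ} (hM : medM s ≤ M) :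
    2 * cnt M s ≤ Multiset.card s := by
  have hc : Multiset.card s ≠ 0 := by simpa using hs
  have h1 : cnt (medM s) s ≤ cnt (Lo s) s := cnt_mono (Lo_le_medM hs)
  have h0 : cnt M s ≤ cnt (medM s) s := cnt_mono hM
  have h2 : cntA (Lo s) (srt s) + (Multiset.card s - 1)/2 + 1 ≤ (srt s).length := by
    apply cntA_le (srt_sorted s)
    · rw [srt_length]; omega
    · exact le_refl _
  rw [cnt_eq] at h1 h0
  rw [srt_length] at h2
  rw [cnt_eq] at *
  omega

/-- Core upper bound: the median of a union is at most the max of the medians. -/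
lemma medM_add_le_max (s t : Multiset ℝ) (hs : s ≠ 0) (ht : t ≠ 0) :
    medM (s + t) ≤ max (medM s) (medM t) := by
  set M := max (medM s) (medM t) with hM
  have hcs : Multiset.card s ≠ 0 := by simpa using hs
  have hct : Multiset.card t ≠ 0 := by simpa using ht
  have hcst : Multiset.card (s + t) ≠ 0 := by rw [Multiset.card_add]; omega
  have hst : s + t ≠ 0 := by intro h; rw [h] at hcst; simp at hcst
  set n := Multiset.card (s + t) with hn
  have hnst : n = Multiset.card s + Multiset.card t := by rw [hn, Multiset.card_add]
  have hcadd : cnt M (s + t) = cnt M s + cnt M t := by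
    rw [cnt, cnt, cnt, Multiset.filter_add, Multiset.card_add]
  have hcsle : 2 * cnt M s ≤ Multiset.card s := two_cnt_le hs (le_max_left _ _)
  have hctle : 2 * cnt M t ≤ Multiset.card t := two_cnt_le ht (le_max_right _ _)
  rw [medM_eq hst]
  have hw := srt_sorted (s + t)
  have hwl : (srt (s+t)).length = n := srt_length _
  -- Lo (s+t) ≤ M always
  have hLo : Lo (s + t) ≤ M := by
    apply getD_le_of_cnt hw
    · rw [hwl]; omega
    · rw [hwl, ← cnt_eq]; omega
  rcases le_or_gt (cnt M (s+t) + n/2 + 1) n with hcase | hcase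
  · -- easy case: both Lo and Hi are ≤ M
    have hHi : Hi (s + t) ≤ M := by
      apply getD_le_of_cnt hw
      · rw [hwl]; omega
      · rw [hwl, ← cnt_eq]; omega
    linarith
  · -- tight case
    have hck : cnt M (s+t) = n / 2 ∧ n % 2 = 0 := by omega
    obtain ⟨hc2, hpar⟩ := hck
    have hcs2 : 2 * cnt M s = Multiset.card s ∧ 2 * cnt M t = Multiset.card t := by omega
    -- Hi (s+t) = getD (n - cnt) = getD (n/2)
    have hkey : n - cnt M (s+t) = n / 2 := by omega
    -- Hi s > M and Hi s ∈ s+t, so Hi (s+t) ≤ Hi s ; similarly for t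
    have hHis : M < Hi s := by
      apply lt_getD_of_cnt (srt_sorted s)
      · rw [srt_length]; omega
      · rw [srt_length, ← cnt_eq]; omega
    have hHit : M < Hi t := by
      apply lt_getD_of_cnt (srt_sorted t)
      · rw [srt_length]; omega
      · rw [srt_length, ← cnt_eq]; omega
    have hHimem_s : Hi s ∈ s + t := by
      rw [Multiset.mem_add]; left
      rw [← Multiset.mem_sort (r := (· ≤ ·))]
      apply getD_mem; rw [srt_length]; omega
    have hHimem_t : Hi t ∈ s + t := by
      rw [Multiset.mem_add]; right
      rw [← Multiset.mem_sort (r := (· ≤ ·))]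
      apply getD_mem; rw [srt_length]; omega
    have hHiles : Hi (s+t) ≤ Hi s := by
      have := min_above hw (by rwa [Multiset.mem_sort]) hHis
      rwa [hwl, ← cnt_eq, hkey] at this
    have hHilet : Hi (s+t) ≤ Hi t := by
      have := min_above hw (by rwa [Multiset.mem_sort]) hHit
      rwa [hwl, ← cnt_eq, hkey] at this
    -- Lo (s+t) is an element of s or t, bounded by Lo of the respective part
    have hLomem : Lo (s+t) ∈ s + t := by
      rw [Lo, ← Multiset.mem_sort (r := (· ≤ ·)) (s := s + t)]
      apply getD_mem; rw [srt_length]; omega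
    -- helper: an element of a part that is ≤ M is at most Lo of the part (in tight situations)
    have hpart : ∀ (v : Multiset ℝ), v ≠ 0 → 2 * cnt M v = Multiset.card v →
        ∀ e ∈ v, e ≤ M → e ≤ Lo v := by
      intro v hv h2c e hev heM
      obtain ⟨j, hj, hje⟩ := List.mem_iff_getElem.mp ((Multiset.mem_sort (r := (· ≤ ·))).mpr hev)
      rw [srt_length] at hj
      have hjlt : j < (Multiset.card v - 1)/2 + 1 := by
        by_contra hc
        push_neg at hc
        have : M < (srt v).getD j 0 := by
          apply lt_getD_of_cnt (srt_sorted v)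
          · rwa [srt_length]
          · rw [srt_length, ← cnt_eq]; omega
        rw [List.getD_eq_getElem _ _ (by rwa [srt_length])] at this
        rw [hje] at this
        linarith
      have : (srt v).getD j 0 ≤ Lo v := by
        apply sorted_getD_mono (srt_sorted v) (by omega)
        rw [srt_length]
        have : Multiset.card v ≠ 0 := by simpa using hv
        omega
      rw [List.getD_eq_getElem _ _ (by rwa [srt_length]), hje] at this
      exact this
    have hfin : Lo (s+t) + Hi (s+t) ≤ 2 * M := by
      rcases Multiset.mem_add.mp hLomem with hmem | hmem
      · have h1 : Lo (s+t) ≤ Lo s := hpart s hs hcs2.1 _ hmem hLo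
        have h2 : Lo s + Hi s = 2 * medM s := by
          rw [medM_eq hs]; ring
        have : medM s ≤ M := le_max_left _ _
        linarith
      · have h1 : Lo (s+t) ≤ Lo t := hpart t ht hcs2.2 _ hmem hLo
        have h2 : Lo t + Hi t = 2 * medM t := by
          rw [medM_eq ht]; ring
        have : medM t ≤ M := le_max_right _ _
        linarith
    linarith



lemma medM_zero : medM 0 = 0 := by
  simp [medM]

lemma medM_neg (s : Multiset ℝ) : medM (s.map (fun x => -x)) = - medM s := by
  rcases eq_or_ne s 0 with rfl | hs
  · simp [medM_zero]
  have hc : Multiset.card s ≠ 0 := by simpa using hs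
  set w := Multiset.sort s (· ≤ ·) with hw
  have hwlen : w.length = Multiset.card s := Multiset.length_sort _
  have hsorted : List.Pairwise (· ≤ ·) w := Multiset.pairwise_sort _ _
  have hkey : Multiset.sort (s.map (fun x => -x)) (· ≤ ·) = (w.map (fun x => -x)).reverse := by
    refine (fun hp h1 h2 => List.Perm.eq_of_pairwise' (r := (· ≤ · : ℝ → ℝ → Prop)) h1 h2 hp) ?_ ?_ ?_
    · rw [← Multiset.coe_eq_coe, Multiset.sort_eq]
      have h1 : ((w.map (fun x => -x)).reverse : Multiset ℝ) = ↑(w.map (fun x => -x)) := by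
        exact Quot.sound (List.reverse_perm _)
      rw [h1, ← Multiset.map_coe, hw, Multiset.sort_eq]
    · exact Multiset.pairwise_sort _ _
    · rw [List.pairwise_reverse]
      rw [List.pairwise_map]
      apply List.Pairwise.imp _ hsorted
      intro a b hab
      linarith
  have hlen2 : (Multiset.sort (s.map (fun x => -x)) (· ≤ ·)).length = Multiset.card s := by
    rw [Multiset.length_sort, Multiset.card_map]
  have hgetD : ∀ j : ℕ, j < Multiset.card s →
      (Multiset.sort (s.map (fun x => -x)) (· ≤ ·)).getD j 0
        = - (w.getD (Multiset.card s - 1 - j) 0) := by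
    intro j hj
    have hj2 : j < (Multiset.sort (s.map (fun x => -x)) (· ≤ ·)).length := by rwa [hlen2]
    have hj3 : Multiset.card s - 1 - j < w.length := by rw [hwlen]; omega
    rw [List.getD_eq_getElem _ _ hj2, List.getD_eq_getElem _ _ hj3]
    rw [List.getElem_of_eq hkey]
    rw [List.getElem_reverse, List.getElem_map]
    congr 2
    rw [List.length_map, hwlen]
  simp only [medM, Multiset.card_map]
  split_ifs with h
  · rw [hgetD _ (by omega)]
    congr 2
    omega
  · rw [hgetD _ (by omega), hgetD _ (by omega)]
    have e1 : Multiset.card s - 1 - (Multiset.card s / 2 - 1) = Multiset.card s / 2 := by omega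
    have e2 : Multiset.card s - 1 - Multiset.card s / 2 = Multiset.card s / 2 - 1 := by omega
    rw [e1, e2]
    ring

lemma min_le_medM_add (s t : Multiset ℝ) (hs : s ≠ 0) (ht : t ≠ 0) :
    min (medM s) (medM t) ≤ medM (s + t) := by
  have h := medM_add_le_max (s.map (fun x => -x)) (t.map (fun x => -x))
    (by simpa using hs) (by simpa using ht)
  rw [← Multiset.map_add, medM_neg, medM_neg, medM_neg, max_neg_neg] at h
  linarith



variable (n : ℕ) (Z u : Fin n → ℝ)

/-- The multiset of `u`-values over indices with `Z`-value in `[lo, hi]`. -/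
noncomputable def T (lo hi : ℝ) : Multiset ℝ :=
  Multiset.map u (Multiset.filter (fun ℓ => lo ≤ Z ℓ ∧ Z ℓ ≤ hi) (↑(List.finRange n)))

lemma subMed_eq_medM (lo hi : ℝ) : subMed n Z u lo hi = medM (T n Z u lo hi) := by
  rw [subMed, med_eq_medM]
  simp only [T, ← Multiset.map_coe, Multiset.filter_coe]

lemma T_ne_zero {lo hi : ℝ} (ℓ : Fin n) (h1 : lo ≤ Z ℓ) (h2 : Z ℓ ≤ hi) :
    T n Z u lo hi ≠ 0 := by
  have : u ℓ ∈ T n Z u lo hi := by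
    rw [T, Multiset.mem_map]
    exact ⟨ℓ, by rw [Multiset.mem_filter]; exact ⟨by simp [List.mem_finRange], h1, h2⟩, rfl⟩
  intro h
  rw [h] at this
  simp at this

lemma T_split {x y : ℝ} (hxy : x < y) (hgap : ∀ ℓ : Fin n, Z ℓ ≤ x ∨ y ≤ Z ℓ)
    {lo hi : ℝ} (hlo : lo ≤ x) (hhi : y ≤ hi) :
    T n Z u lo hi = T n Z u lo x + T n Z u y hi := by
  rw [T, T, T, ← Multiset.map_add]
  congr 1
  rw [Multiset.filter_add_filter]
  have h2 : Multiset.filter (fun a => (lo ≤ Z a ∧ Z a ≤ x) ∧ y ≤ Z a ∧ Z a ≤ hi)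
      (↑(List.finRange n) : Multiset (Fin n)) = 0 := by
    rw [Multiset.filter_eq_nil]
    intro a _ ⟨⟨_, hax⟩, hya, _⟩
    linarith
  rw [h2, add_zero]
  apply Multiset.filter_congr
  intro ℓ _
  constructor
  · intro ⟨hl, hh⟩
    rcases hgap ℓ with hc | hc
    · exact Or.inl ⟨hl, hc⟩
    · exact Or.inr ⟨hc, hh⟩
  · intro h
    rcases h with ⟨h1, h2⟩ | ⟨h1, h2⟩
    · exact ⟨h1, le_trans h2 (le_trans (le_of_lt hxy) hhi)⟩
    · exact ⟨le_trans hlo (le_trans (le_of_lt hxy) h1), h2⟩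

/-- subMed only depends on the endpoints as real numbers (trivially), and
betweenness corollaries specialized to subMed -/
lemma subMed_split_le {x y lo hi : ℝ} (hxy : x < y) (hgap : ∀ ℓ : Fin n, Z ℓ ≤ x ∨ y ≤ Z ℓ)
    (hlo : lo ≤ x) (hhi : y ≤ hi)
    (ℓ₁ : Fin n) (h1 : lo ≤ Z ℓ₁) (h1' : Z ℓ₁ ≤ x)
    (ℓ₂ : Fin n) (h2 : y ≤ Z ℓ₂) (h2' : Z ℓ₂ ≤ hi) :
    subMed n Z u lo hi ≤ max (subMed n Z u lo x) (subMed n Z u y hi) := by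
  rw [subMed_eq_medM, subMed_eq_medM, subMed_eq_medM, T_split n Z u hxy hgap hlo hhi]
  exact medM_add_le_max _ _ (T_ne_zero n Z u ℓ₁ h1 h1') (T_ne_zero n Z u ℓ₂ h2 h2')

lemma min_le_subMed_split {x y lo hi : ℝ} (hxy : x < y) (hgap : ∀ ℓ : Fin n, Z ℓ ≤ x ∨ y ≤ Z ℓ)
    (hlo : lo ≤ x) (hhi : y ≤ hi)
    (ℓ₁ : Fin n) (h1 : lo ≤ Z ℓ₁) (h1' : Z ℓ₁ ≤ x)
    (ℓ₂ : Fin n) (h2 : y ≤ Z ℓ₂) (h2' : Z ℓ₂ ≤ hi) :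
    min (subMed n Z u lo x) (subMed n Z u y hi) ≤ subMed n Z u lo hi := by
  rw [subMed_eq_medM, subMed_eq_medM, subMed_eq_medM, T_split n Z u hxy hgap hlo hhi]
  exact min_le_medM_add _ _ (T_ne_zero n Z u ℓ₁ h1 h1') (T_ne_zero n Z u ℓ₂ h2 h2')

/-- isoMedProj depends on `i` only through `Z i`. -/
lemma iso_congr {i j : Fin n} (h : Z i = Z j) :
    isoMedProj n Z u i = isoMedProj n Z u j := by
  simp only [isoMedProj, h]

lemma iso_mono {i j : Fin n} (h : Z i ≤ Z j) :
    isoMedProj n Z u i ≤ isoMedProj n Z u j := by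
  apply Finset.sup'_le
  intro a ha
  rw [Finset.mem_filter] at ha
  have haj : a ∈ Finset.univ.filter fun b => Z b ≤ Z j :=
    Finset.mem_filter.mpr ⟨Finset.mem_univ _, le_trans ha.2 h⟩
  refine le_trans ?_ (Finset.le_sup' _ haj)
  apply Finset.le_inf'
  intro k hk
  rw [Finset.mem_filter] at hk
  have hmem : k ∈ Finset.univ.filter fun k' => Z i ≤ Z k' := by
    rw [Finset.mem_filter]
    exact ⟨Finset.mem_univ k, le_trans h hk.2⟩
  exact Finset.inf'_le _ hmem

/-- Witness for the sup': a `j0` whose whole inf-family lies above `isoMedProj i`. -/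
lemma iso_witness_sup (i : Fin n) :
    ∃ j0 : Fin n, Z j0 ≤ Z i ∧
      ∀ k : Fin n, Z i ≤ Z k → isoMedProj n Z u i ≤ subMed n Z u (Z j0) (Z k) := by
  obtain ⟨j0, hj0mem, heq⟩ := Finset.exists_mem_eq_sup'
    (⟨i, by simp⟩ : (Finset.univ.filter fun j => Z j ≤ Z i).Nonempty)
    (fun j => (Finset.univ.filter fun k => Z i ≤ Z k).inf' ⟨i, by simp⟩
      fun k => subMed n Z u (Z j) (Z k))
  rw [Finset.mem_filter] at hj0mem
  refine ⟨j0, hj0mem.2, fun k hk => ?_⟩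
  rw [isoMedProj, heq]
  have hmem : k ∈ Finset.univ.filter fun k' => Z i ≤ Z k' := by
    rw [Finset.mem_filter]
    exact ⟨Finset.mem_univ k, hk⟩
  exact Finset.inf'_le _ hmem

/-- Witness for the inf': for any admissible `j0`, some `k0` with small subMed. -/
lemma iso_witness_inf (i : Fin n) (j0 : Fin n) (hj0 : Z j0 ≤ Z i) :
    ∃ k0 : Fin n, Z i ≤ Z k0 ∧ subMed n Z u (Z j0) (Z k0) ≤ isoMedProj n Z u i := by
  obtain ⟨k0, hk0mem, heq⟩ := Finset.exists_mem_eq_inf'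
    (⟨i, by simp⟩ : (Finset.univ.filter fun k => Z i ≤ Z k).Nonempty)
    (fun k => subMed n Z u (Z j0) (Z k))
  rw [Finset.mem_filter] at hk0mem
  refine ⟨k0, hk0mem.2, ?_⟩
  rw [← heq, isoMedProj]
  have hmem : j0 ∈ Finset.univ.filter fun j => Z j ≤ Z i := by
    rw [Finset.mem_filter]
    exact ⟨Finset.mem_univ j0, hj0⟩
  exact Finset.le_sup' (fun j => (Finset.univ.filter fun k => Z i ≤ Z k).inf'
    ⟨i, by simp⟩ fun k => subMed n Z u (Z j) (Z k)) hmem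


section Blocks

variable {n : ℕ} {Z u : Fin n → ℝ} (hZ : Monotone Z)
variable {m : ℕ} {b : Fin (m + 1) → ℕ} {r : Fin m → ℝ}
variable (hb0 : b 0 = 0) (hblast : b (Fin.last m) = n)
variable (hbmono : StrictMono b) (hrmono : StrictMono r)
variable (hval : ∀ (t : Fin m) (i : Fin n),
    b t.castSucc ≤ (i : ℕ) → (i : ℕ) < b t.succ → isoMedProj n Z u i = r t)

lemma Zle (hZ : Monotone Z) {p q : Fin n} (h : (p : ℕ) ≤ (q : ℕ)) : Z p ≤ Z q :=
  hZ (Fin.le_def.mpr h)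

lemma idx_lt (hZ : Monotone Z) {p q : Fin n} (h : Z p < Z q) : (p : ℕ) < (q : ℕ) := by
  by_contra hc
  push_neg at hc
  exact absurd (Zle hZ hc) (not_le.mpr h)

include hb0 hblast hbmono in
lemma blockOf (i : Fin n) : ∃ t : Fin m, b t.castSucc ≤ (i : ℕ) ∧ (i : ℕ) < b t.succ := by
  classical
  set F : Finset (Fin (m+1)) := Finset.univ.filter (fun τ => b τ ≤ (i : ℕ)) with hF
  have hFne : F.Nonempty := ⟨0, by simp [hF, hb0]⟩
  set τ := F.max' hFne with hτ
  have hτmem : b τ ≤ (i : ℕ) := (Finset.mem_filter.mp (F.max'_mem hFne)).2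
  have hτne : τ ≠ Fin.last m := by
    intro h
    rw [h, hblast] at hτmem
    exact absurd i.isLt (not_lt.mpr hτmem)
  obtain ⟨t, ht⟩ := Fin.exists_castSucc_eq.mpr hτne
  refine ⟨t, by rw [ht]; exact hτmem, ?_⟩
  by_contra hc
  push_neg at hc
  have hmem : t.succ ∈ F := Finset.mem_filter.mpr ⟨Finset.mem_univ _, hc⟩
  have := F.le_max' t.succ hmem
  rw [← hτ, ← ht] at this
  exact absurd this (not_le.mpr (Fin.castSucc_lt_succ (i := t)))

include hZ hb0 hblast hbmono hrmono hval in
lemma block_sep {i j : Fin n} (t : Fin m)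
    (hi : (i : ℕ) < b t.succ) (hj : b t.succ ≤ (j : ℕ)) : Z i < Z j := by
  have hij : (i : ℕ) < (j : ℕ) := by omega
  have hle : Z i ≤ Z j := Zle hZ (le_of_lt hij)
  rcases lt_or_eq_of_le hle with h | h
  · exact h
  · exfalso
    obtain ⟨ti, hti1, hti2⟩ := blockOf hb0 hblast hbmono i
    obtain ⟨tj, htj1, htj2⟩ := blockOf hb0 hblast hbmono j
    have h1 : b ti.castSucc < b t.succ := by omega
    have h2 : b t.succ < b tj.succ := by omega
    have h3 : (ti : ℕ) < (t : ℕ) + 1 := by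
      have := hbmono.lt_iff_lt.mp h1
      rw [Fin.lt_def] at this
      simpa using this
    have h4 : (t : ℕ) < (tj : ℕ) := by
      have := hbmono.lt_iff_lt.mp h2
      rw [Fin.lt_def] at this
      simpa using this
    have h5 : ti < tj := by rw [Fin.lt_def]; omega
    have h6 : r ti < r tj := hrmono h5
    have e1 : isoMedProj n Z u i = r ti := hval ti i hti1 hti2
    have e2 : isoMedProj n Z u j = r tj := hval tj j htj1 htj2
    have := iso_congr n Z u h
    rw [e1, e2] at this
    linarith

include hbmono in
lemma succ_le_of_blocks {τ t : Fin m} (h : b τ.castSucc < b t.castSucc) :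
    b τ.succ ≤ b t.castSucc := by
  have h1 := hbmono.lt_iff_lt.mp h
  rw [Fin.castSucc_lt_castSucc_iff] at h1
  exact hbmono.le_iff_le.mpr (Fin.succ_le_castSucc_iff.mpr h1)

include hZ hb0 hblast hbmono hrmono hval in
/-- (b), left inequality: the block value is at most the median over `[Z st, Z i]`. -/
lemma main_left : ∀ (K : ℕ) (i : Fin n) (t : Fin m) (st : Fin n), (i : ℕ) = K →
    b t.castSucc ≤ (i : ℕ) → (i : ℕ) < b t.succ → (st : ℕ) = b t.castSucc →
    r t ≤ subMed n Z u (Z st) (Z i) := by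
  intro K
  induction K using Nat.strong_induction_on with
  | _ K IH =>
  intro i t st hiK h1 h2 h3
  by_contra hcon
  push_neg at hcon
  have hiso : isoMedProj n Z u i = r t := hval t i h1 h2
  obtain ⟨j0, hj0le, hj0⟩ := iso_witness_sup n Z u i
  rw [hiso] at hj0
  have hsti : (st : ℕ) ≤ (i : ℕ) := by omega
  have hZsti : Z st ≤ Z i := Zle hZ hsti
  rcases le_or_gt (Z st) (Z j0) with hA | hB
  · -- j0 has Z-value inside the block (at or above Z st)
    rcases eq_or_lt_of_le hA with heq | hlt
    · have := hj0 i (le_refl _)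
      rw [← heq] at this
      linarith
    · -- Z st < Z j0 : split at the last Z-value below Z j0
      classical
      set F : Finset (Fin n) := Finset.univ.filter (fun ℓ => Z ℓ < Z j0) with hF
      have hFne : F.Nonempty := ⟨st, by simp [hF]; exact hlt⟩
      set a' := F.max' hFne with ha'
      have ha'lt : Z a' < Z j0 := (Finset.mem_filter.mp (F.max'_mem hFne)).2
      have hmax : ∀ ℓ : Fin n, Z ℓ < Z j0 → Z ℓ ≤ Z a' := by
        intro ℓ h
        exact hZ (F.le_max' ℓ (Finset.mem_filter.mpr ⟨Finset.mem_univ _, h⟩))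
      have hsta' : Z st ≤ Z a' := hmax st hlt
      have hgap : ∀ ℓ : Fin n, Z ℓ ≤ Z a' ∨ Z j0 ≤ Z ℓ := by
        intro ℓ
        rcases lt_or_ge (Z ℓ) (Z j0) with h | h
        · exact Or.inl (hmax ℓ h)
        · exact Or.inr h
      have hmin := min_le_subMed_split n Z u ha'lt hgap hsta' hj0le
        st (le_refl _) hsta' i hj0le (le_refl _)
      have h2nd := hj0 i (le_refl _)
      have hlt2 : subMed n Z u (Z st) (Z a') < r t := by
        rcases min_cases (subMed n Z u (Z st) (Z a')) (subMed n Z u (Z j0) (Z i)) with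
          ⟨hm, _⟩ | ⟨hm, _⟩
        · rw [hm] at hmin; linarith
        · rw [hm] at hmin; linarith
      have ha'i : (a' : ℕ) < (i : ℕ) := idx_lt hZ (lt_of_lt_of_le ha'lt hj0le)
      have ha'st : (st : ℕ) ≤ (a' : ℕ) :=
        F.le_max' st (Finset.mem_filter.mpr ⟨Finset.mem_univ _, hlt⟩)
      exact absurd (IH (a' : ℕ) (by omega) a' t st rfl (by omega) (by omega) h3)
        (not_le.mpr hlt2)
  · -- Z j0 < Z st : j0 lies in an earlier block
    have hst1 : 1 ≤ (st : ℕ) := by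
      by_contra hc
      push_neg at hc
      have : (st : ℕ) ≤ (j0 : ℕ) := by omega
      exact absurd (Zle hZ this) (not_le.mpr hB)
    have hspn : (st : ℕ) - 1 < n := by omega
    obtain ⟨sp, hspval⟩ : ∃ sp : Fin n, (sp : ℕ) = (st : ℕ) - 1 :=
      ⟨⟨(st : ℕ) - 1, hspn⟩, rfl⟩
    obtain ⟨τ, hτ1, hτ2⟩ := blockOf hb0 hblast hbmono sp
    have hspst : Z sp < Z st := by
      apply block_sep hZ hb0 hblast hbmono hrmono hval τ hτ2
      have hcc : b τ.castSucc < b t.castSucc := by omega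
      have := succ_le_of_blocks hbmono hcc
      omega
    have hτt : τ < t := by
      have : b τ.castSucc < b t.castSucc := by omega
      have := hbmono.lt_iff_lt.mp this
      rwa [Fin.castSucc_lt_castSucc_iff] at this
    have hj0sp : Z j0 ≤ Z sp := by
      have : (j0 : ℕ) < (st : ℕ) := idx_lt hZ hB
      exact Zle hZ (by omega)
    have hgap2 : ∀ ℓ : Fin n, Z ℓ ≤ Z sp ∨ Z st ≤ Z ℓ := by
      intro ℓ
      rcases le_or_gt (ℓ : ℕ) ((st : ℕ) - 1) with h | h
      · exact Or.inl (Zle hZ (by omega))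
      · exact Or.inr (Zle hZ (by omega))
    have hsplit1 := subMed_split_le n Z u hspst hgap2 hj0sp hZsti
      j0 (le_refl _) hj0sp i hZsti (le_refl _)
    have h1st := hj0 i (le_refl _)
    have hspbig : r t ≤ subMed n Z u (Z j0) (Z sp) := by
      rcases max_cases (subMed n Z u (Z j0) (Z sp)) (subMed n Z u (Z st) (Z i)) with
        ⟨hm, _⟩ | ⟨hm, _⟩
      · rw [hm] at hsplit1; linarith
      · rw [hm] at hsplit1; linarith
    obtain ⟨k0, hk0ge, hk0le⟩ := iso_witness_inf n Z u sp j0 hj0sp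
    have hspiso : isoMedProj n Z u sp = r τ := hval τ sp hτ1 hτ2
    have hk0lt : subMed n Z u (Z j0) (Z k0) < r t := by
      rw [hspiso] at hk0le
      exact lt_of_le_of_lt hk0le (hrmono hτt)
    rcases lt_or_ge (Z k0) (Z st) with hk0small | hk0big
    · have hle' : Z k0 ≤ Z sp := (hgap2 k0).resolve_right (not_le.mpr hk0small)
      have heq' : Z k0 = Z sp := le_antisymm hle' hk0ge
      rw [heq'] at hk0lt
      linarith
    · rcases le_or_gt (Z i) (Z k0) with hk0ge2 | hk0mid
      · exact absurd (hj0 k0 hk0ge2) (not_le.mpr hk0lt)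
      · have hmin2 := min_le_subMed_split n Z u hspst hgap2 hj0sp hk0big
          j0 (le_refl _) hj0sp k0 hk0big (le_refl _)
        have hltk : subMed n Z u (Z st) (Z k0) < r t := by
          rcases min_cases (subMed n Z u (Z j0) (Z sp)) (subMed n Z u (Z st) (Z k0)) with
            ⟨hm, _⟩ | ⟨hm, _⟩
          · rw [hm] at hmin2; linarith
          · rw [hm] at hmin2; linarith
        have hk0idx1 : (st : ℕ) ≤ (k0 : ℕ) := by
          by_contra hc
          push_neg at hc
          have : Z k0 ≤ Z sp := Zle hZ (by omega)
          linarith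
        have hk0idx2 : (k0 : ℕ) < (i : ℕ) := idx_lt hZ hk0mid
        exact absurd (IH (k0 : ℕ) (by omega) k0 t st rfl (by omega) (by omega) h3)
          (not_le.mpr hltk)

include hZ hb0 hblast hbmono hrmono hval in
/-- Escape lemma: a median starting at the next block start stays above `r t`. -/
lemma escape : ∀ (K : ℕ) (k : Fin n) (t : Fin m) (s' : Fin n), (k : ℕ) = K →
    (s' : ℕ) = b t.succ → b t.succ ≤ (k : ℕ) →
    r t < subMed n Z u (Z s') (Z k) := by
  intro K
  induction K using Nat.strong_induction_on with
  | _ K IH =>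
  intro k t s' hkK hs' hk
  obtain ⟨τ, hτ1, hτ2⟩ := blockOf hb0 hblast hbmono k
  have hτt : t < τ := by
    have h1 : b t.succ < b τ.succ := by omega
    have := hbmono.lt_iff_lt.mp h1
    rwa [Fin.succ_lt_succ_iff] at this
  have hrt : r t < r τ := hrmono hτt
  rcases eq_or_lt_of_le (show b t.succ ≤ b τ.castSucc from
      hbmono.le_iff_le.mpr (Fin.succ_le_castSucc_iff.mpr hτt)) with heq | hlt
  · -- s' is exactly the start of block τ
    have hs'2 : (s' : ℕ) = b τ.castSucc := by omega
    have := main_left hZ hb0 hblast hbmono hrmono hval (k : ℕ) k τ s' rfl hτ1 hτ2 hs'2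
    linarith
  · -- strictly earlier: split at start of block τ
    have hsτn : b τ.castSucc < n := by
      have : (k : ℕ) < n := k.isLt
      omega
    obtain ⟨sτ, hsτ1⟩ : ∃ x : Fin n, (x : ℕ) = b τ.castSucc := ⟨⟨b τ.castSucc, hsτn⟩, rfl⟩
    have hspn : b τ.castSucc - 1 < n := by omega
    obtain ⟨sp, hsp1⟩ : ∃ x : Fin n, (x : ℕ) = b τ.castSucc - 1 :=
      ⟨⟨b τ.castSucc - 1, hspn⟩, rfl⟩
    obtain ⟨τ', hτ'1, hτ'2⟩ := blockOf hb0 hblast hbmono sp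
    have hspsτ : Z sp < Z sτ := by
      apply block_sep hZ hb0 hblast hbmono hrmono hval τ' hτ'2
      have hcc : b τ'.castSucc < b τ.castSucc := by omega
      have := succ_le_of_blocks hbmono hcc
      omega
    have hs'sp : Z s' ≤ Z sp := Zle hZ (by omega)
    have hsτk : Z sτ ≤ Z k := Zle hZ (by omega)
    have hgap : ∀ ℓ : Fin n, Z ℓ ≤ Z sp ∨ Z sτ ≤ Z ℓ := by
      intro ℓ
      rcases le_or_gt (ℓ : ℕ) (b τ.castSucc - 1) with h | h
      · exact Or.inl (Zle hZ (by omega))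
      · exact Or.inr (Zle hZ (by omega))
    have hmin := min_le_subMed_split n Z u hspsτ hgap hs'sp hsτk
      s' (le_refl _) hs'sp k hsτk (le_refl _)
    have hIH : r t < subMed n Z u (Z s') (Z sp) := by
      apply IH (sp : ℕ) (by omega) sp t s' rfl hs' (by omega)
    have hML : r τ ≤ subMed n Z u (Z sτ) (Z k) :=
      main_left hZ hb0 hblast hbmono hrmono hval (k : ℕ) k τ sτ rfl hτ1 hτ2 hsτ1
    rcases min_cases (subMed n Z u (Z s') (Z sp)) (subMed n Z u (Z sτ) (Z k)) with
      ⟨hm, _⟩ | ⟨hm, _⟩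
    · rw [hm] at hmin; linarith
    · rw [hm] at hmin; linarith

include hZ hb0 hblast hbmono hrmono hval in
/-- (b), right inequality. -/
lemma main_right : ∀ (K : ℕ) (i : Fin n) (t : Fin m) (en : Fin n), b t.succ - (i : ℕ) = K →
    b t.castSucc ≤ (i : ℕ) → (i : ℕ) < b t.succ → (en : ℕ) + 1 = b t.succ →
    subMed n Z u (Z i) (Z en) ≤ r t := by
  intro K
  induction K using Nat.strong_induction_on with
  | _ K IH =>
  intro i t en hiK h1 h2 h3
  by_contra hcon
  push_neg at hcon
  have hiso : isoMedProj n Z u i = r t := hval t i h1 h2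
  have hien : (i : ℕ) ≤ (en : ℕ) := by omega
  have hZien : Z i ≤ Z en := Zle hZ hien
  obtain ⟨k0, hk0ge, hk0le⟩ := iso_witness_inf n Z u i i (le_refl _)
  rw [hiso] at hk0le
  rcases le_or_gt (Z k0) (Z en) with hsmall | hbig
  · rcases eq_or_lt_of_le hsmall with heq | hlt
    · rw [heq] at hk0le; linarith
    · -- Z i ≤ Z k0 < Z en : split at the class boundary above Z k0
      classical
      set F : Finset (Fin n) := Finset.univ.filter (fun ℓ => Z ℓ ≤ Z k0) with hF
      have hFne : F.Nonempty := ⟨k0, by simp [hF]⟩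
      set p := F.max' hFne with hp
      have hpmem : Z p ≤ Z k0 := (Finset.mem_filter.mp (F.max'_mem hFne)).2
      have hk0p : (k0 : ℕ) ≤ (p : ℕ) := F.le_max' k0 (by simp [hF])
      have hZpk0 : Z p = Z k0 := le_antisymm hpmem (Zle hZ hk0p)
      have hpen : (p : ℕ) < (en : ℕ) := idx_lt hZ (by rw [hZpk0]; exact hlt)
      have hp1n : (p : ℕ) + 1 < n := by have := en.isLt; omega
      obtain ⟨p1, hp1v⟩ : ∃ x : Fin n, (x : ℕ) = (p : ℕ) + 1 := ⟨⟨(p : ℕ) + 1, hp1n⟩, rfl⟩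
      have hZp1 : Z k0 < Z p1 := by
        by_contra hc
        push_neg at hc
        have hmem : p1 ∈ F := Finset.mem_filter.mpr ⟨Finset.mem_univ _, hc⟩
        have := F.le_max' p1 hmem
        rw [Fin.le_def] at this
        omega
      have hgap : ∀ ℓ : Fin n, Z ℓ ≤ Z k0 ∨ Z p1 ≤ Z ℓ := by
        intro ℓ
        rcases le_or_gt (Z ℓ) (Z k0) with h | h
        · exact Or.inl h
        · right
          apply Zle hZ
          have hℓp : ¬ (ℓ : ℕ) ≤ (p : ℕ) := by
            intro hc
            have : Z ℓ ≤ Z p := Zle hZ hc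
            rw [hZpk0] at this
            linarith
          omega
      have hZp1en : Z p1 ≤ Z en := Zle hZ (by omega)
      have hsplit := subMed_split_le n Z u hZp1 hgap hk0ge hZp1en
        k0 hk0ge (le_refl _) en hZp1en (le_refl _)
      have hbig2 : r t < subMed n Z u (Z p1) (Z en) := by
        rcases max_cases (subMed n Z u (Z i) (Z k0)) (subMed n Z u (Z p1) (Z en)) with
          ⟨hm, _⟩ | ⟨hm, _⟩
        · rw [hm] at hsplit; linarith
        · rw [hm] at hsplit; linarith
      -- apply IH at p1
      have hip1 : (i : ℕ) < (p1 : ℕ) := by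
        have hip : (i : ℕ) ≤ (p : ℕ) := by
          have hmem : i ∈ F := Finset.mem_filter.mpr ⟨Finset.mem_univ _, hk0ge⟩
          have := F.le_max' i hmem
          rw [Fin.le_def] at this
          omega
        omega
      have hp1en2 : (p1 : ℕ) < b t.succ := by omega
      exact absurd (IH (b t.succ - (p1 : ℕ)) (by omega) p1 t en rfl (by omega) hp1en2 h3)
        (not_le.mpr hbig2)
  · -- Z k0 beyond the block: use the escape lemma
    have hk0en : (en : ℕ) < (k0 : ℕ) := idx_lt hZ hbig
    have hen1n : (en : ℕ) + 1 < n := by have := k0.isLt; omega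
    obtain ⟨en1, hen1u⟩ : ∃ x : Fin n, (x : ℕ) = (en : ℕ) + 1 := ⟨⟨(en : ℕ) + 1, hen1n⟩, rfl⟩
    have hen1v : (en1 : ℕ) = b t.succ := by omega
    have hesc := escape hZ hb0 hblast hbmono hrmono hval (k0 : ℕ) k0 t en1 rfl hen1v
      (by omega)
    have hZenen1 : Z en < Z en1 :=
      block_sep hZ hb0 hblast hbmono hrmono hval t (by omega) (by omega)
    have hZen1k0 : Z en1 ≤ Z k0 := Zle hZ (by omega)
    have hgap : ∀ ℓ : Fin n, Z ℓ ≤ Z en ∨ Z en1 ≤ Z ℓ := by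
      intro ℓ
      rcases le_or_gt (ℓ : ℕ) (en : ℕ) with h | h
      · exact Or.inl (Zle hZ h)
      · exact Or.inr (Zle hZ (by omega))
    have hmin := min_le_subMed_split n Z u hZenen1 hgap hZien hZen1k0
      i (le_refl _) hZien k0 hZen1k0 (le_refl _)
    rcases min_cases (subMed n Z u (Z i) (Z en)) (subMed n Z u (Z en1) (Z k0)) with
      ⟨hm, _⟩ | ⟨hm, _⟩
    · rw [hm] at hmin; linarith
    · rw [hm] at hmin; linarith

end Blocks

section Existence

variable {n : ℕ} {Z u : Fin n → ℝ}

/-- Existence of the block representation. -/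
lemma exists_blocks (hn : 1 ≤ n) (hZ : Monotone Z) :
    ∃ (m : ℕ) (b : Fin (m + 1) → ℕ) (r : Fin m → ℝ),
      b 0 = 0 ∧ b (Fin.last m) = n ∧ StrictMono b ∧ StrictMono r ∧
      ∀ (t : Fin m) (i : Fin n),
        b t.castSucc ≤ (i : ℕ) → (i : ℕ) < b t.succ → isoMedProj n Z u i = r t := by
  classical
  set g : Fin n → ℝ := isoMedProj n Z u with hg
  have gmono : ∀ p q : Fin n, (p : ℕ) ≤ (q : ℕ) → g p ≤ g q :=
    fun p q h => iso_mono n Z u (Zle hZ h)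
  set v : ℕ → ℝ := fun i => if h : i < n then g ⟨i, h⟩ else 0 with hv
  have hvg : ∀ (i : Fin n), v (i : ℕ) = g i := by
    intro i
    rw [hv]
    simp only [i.isLt, dif_pos]
  set S : Finset ℕ :=
    insert n ((Finset.range n).filter (fun i => i = 0 ∨ v i ≠ v (i - 1))) with hS
  have hnS : n ∈ S := Finset.mem_insert_self _ _
  have h0S : 0 ∈ S := by
    rw [hS]
    apply Finset.mem_insert_of_mem
    rw [Finset.mem_filter]
    exact ⟨Finset.mem_range.mpr (by omega), Or.inl rfl⟩
  have hSle : ∀ x ∈ S, x ≤ n := by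
    intro x hx
    rw [hS, Finset.mem_insert] at hx
    rcases hx with rfl | hx
    · exact le_refl _
    · rw [Finset.mem_filter, Finset.mem_range] at hx
      omega
  have hScard : 1 ≤ S.card := Finset.card_pos.mpr ⟨n, hnS⟩
  set m := S.card - 1 with hm
  have hcard : S.card = m + 1 := by omega
  set e := S.orderIsoOfFin hcard with he
  set b : Fin (m + 1) → ℕ := fun τ => (e τ : ℕ) with hb
  have hbmem : ∀ τ, b τ ∈ S := fun τ => (e τ).2
  have hbsurj : ∀ x ∈ S, ∃ τ, b τ = x := by
    intro x hx
    obtain ⟨τ, hτ⟩ := e.surjective ⟨x, hx⟩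
    refine ⟨τ, ?_⟩
    show ((e τ : { x // x ∈ S }) : ℕ) = x
    rw [hτ]
  have hbmono : StrictMono b := by
    intro a c h
    have : e a < e c := e.strictMono h
    exact this
  have hb0 : b 0 = 0 := by
    obtain ⟨τ, hτ⟩ := hbsurj 0 h0S
    have h1 : b 0 ≤ b τ := by
      rcases eq_or_lt_of_le (Fin.zero_le τ) with rfl | h
      · exact le_refl _
      · exact le_of_lt (hbmono h)
    omega
  have hblast : b (Fin.last m) = n := by
    obtain ⟨τ, hτ⟩ := hbsurj n hnS
    have h1 : b τ ≤ b (Fin.last m) := by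
      rcases eq_or_lt_of_le (Fin.le_last τ) with heq | h
      · rw [heq]
      · exact le_of_lt (hbmono h)
    have h2 : b (Fin.last m) ≤ n := hSle _ (hbmem _)
    omega
  -- block constancy
  have hconst : ∀ (K : ℕ) (t : Fin m) (i : Fin n), (i : ℕ) = K →
      b t.castSucc ≤ (i : ℕ) → (i : ℕ) < b t.succ → g i = v (b t.castSucc) := by
    intro K
    induction K using Nat.strong_induction_on with
    | _ K IH =>
    intro t i hiK h1 h2
    rcases eq_or_lt_of_le h1 with heq | hlt
    · rw [← hvg i, ← heq]
    · have hiS : (i : ℕ) ∉ S := by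
        intro hmem
        obtain ⟨τ, hτ⟩ := hbsurj _ hmem
        have hτ1 : t.castSucc < τ := by
          apply hbmono.lt_iff_lt.mp
          omega
        have hτ2 : τ < t.succ := by
          apply hbmono.lt_iff_lt.mp
          omega
        rw [Fin.lt_def] at hτ1 hτ2
        simp only [Fin.coe_castSucc, Fin.val_succ] at hτ1 hτ2
        omega
      have hine : (i : ℕ) ≠ n := by have := i.isLt; omega
      have hP : ¬((i : ℕ) = 0 ∨ v (i : ℕ) ≠ v ((i : ℕ) - 1)) := by
        intro hP
        apply hiS
        rw [hS]
        apply Finset.mem_insert_of_mem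
        rw [Finset.mem_filter]
        exact ⟨Finset.mem_range.mpr i.isLt, hP⟩
      push_neg at hP
      obtain ⟨hi0, hveq⟩ := hP
      have hprevn : (i : ℕ) - 1 < n := by have := i.isLt; omega
      set ip : Fin n := ⟨(i : ℕ) - 1, hprevn⟩ with hip
      have hipval : (ip : ℕ) = (i : ℕ) - 1 := rfl
      have := IH ((i : ℕ) - 1) (by omega) t ip hipval (by omega) (by omega)
      rw [← hvg i, hveq, ← hipval, hvg ip, this]
  -- the block values
  set r : Fin m → ℝ := fun t => v (b t.castSucc) with hr
  have hval : ∀ (t : Fin m) (i : Fin n),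
      b t.castSucc ≤ (i : ℕ) → (i : ℕ) < b t.succ → isoMedProj n Z u i = r t := by
    intro t i h1 h2
    exact hconst (i : ℕ) t i rfl h1 h2
  -- r is strictly monotone
  have hstep : ∀ (t1 t2 : Fin m), (t1 : ℕ) + 1 = (t2 : ℕ) → r t1 < r t2 := by
    intro t1 t2 h12
    have hcs : t2.castSucc = t1.succ := by
      apply Fin.ext
      simp only [Fin.coe_castSucc, Fin.val_succ]
      omega
    set j := b t2.castSucc with hj
    have hjlt : j < n := by
      have h1 : b t2.castSucc < b t2.succ := hbmono (Fin.castSucc_lt_succ (i := t2))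
      have h2 : b t2.succ ≤ b (Fin.last m) := by
        rcases eq_or_lt_of_le (Fin.le_last t2.succ) with heq | h
        · rw [heq]
        · exact le_of_lt (hbmono h)
      omega
    have hjpos : 0 < j := by
      have : b 0 < b t2.castSucc := by
        apply hbmono
        rw [Fin.lt_def]
        simp only [Fin.coe_castSucc, Fin.val_zero]
        omega
      omega
    have hjS : j ∈ S := hbmem _
    have hjP : j = 0 ∨ v j ≠ v (j - 1) := by
      rw [hS, Finset.mem_insert] at hjS
      rcases hjS with h | h
      · omega
      · exact (Finset.mem_filter.mp h).2
    have hjne : v j ≠ v (j - 1) := by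
      rcases hjP with h | h
      · omega
      · exact h
    have hlow : b t1.castSucc < b t1.succ := hbmono (Fin.castSucc_lt_succ (i := t1))
    have hjeq : b t1.succ = j := by rw [hj, hcs]
    obtain ⟨jp, hjpv⟩ : ∃ x : Fin n, (x : ℕ) = j - 1 := ⟨⟨j - 1, by omega⟩, rfl⟩
    obtain ⟨jc, hjcv⟩ : ∃ x : Fin n, (x : ℕ) = j := ⟨⟨j, hjlt⟩, rfl⟩
    have hprev : v (j - 1) = r t1 := by
      have h := hconst (j - 1) t1 jp hjpv (by omega) (by omega)
      calc v (j - 1) = g jp := by rw [← hjpv, hvg jp]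
        _ = r t1 := h
    have hcur : v j = r t2 := by
      have h := hconst j t2 jc hjcv (by omega) (by
        have h2 : b t2.castSucc < b t2.succ := hbmono (Fin.castSucc_lt_succ (i := t2))
        omega)
      calc v j = g jc := by rw [← hjcv, hvg jc]
        _ = r t2 := h
    have hle : v (j - 1) ≤ v j := by
      have h := gmono jp jc (by omega)
      calc v (j - 1) = g jp := by rw [← hjpv, hvg jp]
        _ ≤ g jc := h
        _ = v j := by rw [← hjcv, hvg jc]
    rw [hprev, hcur] at hjne hle
    exact lt_of_le_of_ne hle (Ne.symm hjne)
  have hrmono : StrictMono r := by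
    have hgen : ∀ (d : ℕ) (t1 t2 : Fin m), (t2 : ℕ) = (t1 : ℕ) + d + 1 → r t1 < r t2 := by
      intro d
      induction d with
      | zero => intro t1 t2 h; exact hstep t1 t2 (by omega)
      | succ d ihd =>
        intro t1 t2 h
        have hmidlt : (t1 : ℕ) + d + 1 < m := by have := t2.isLt; omega
        set tm : Fin m := ⟨(t1 : ℕ) + d + 1, hmidlt⟩ with htm
        have h1 : r t1 < r tm := ihd t1 tm rfl
        have h2 : r tm < r t2 := hstep tm t2 (by
          have : (tm : ℕ) = (t1 : ℕ) + d + 1 := rfl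
          omega)
        linarith
    intro t1 t2 h
    rw [Fin.lt_def] at h
    exact hgen ((t2 : ℕ) - (t1 : ℕ) - 1) t1 t2 (by omega)
  exact ⟨m, b, r, hb0, hblast, hbmono, hrmono, hval⟩

end Existence

end MedAux

/-- properties of the isotonic median projection: assume
`Z_1 ≤ … ≤ Z_n`. Then `ũ = isoMedProj` is isotone with respect to `Z`
(so it admits a block representation with breakpoints `0 = b_0 < … < b_m = n`
and strictly increasing block values `r_0 < … < r_{m-1}`, `ũ_i = r_t` for
`b_t ≤ i < b_{t+1}`); such a representation exists, and for any such representation: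
(a) `r_t` is the median of the `u`-values over block `t`; and
(b) for each index `i` in block `t` (with `st`, `en` the first and last index of
block `t`), `Med((u_ℓ)_{Z_{st} ≤ Z_ℓ ≤ Z_i}) ≥ r_t ≥ Med((u_ℓ)_{Z_i ≤ Z_ℓ ≤ Z_{en}})`. -/
theorem isoMedProj_properties (n : ℕ) (hn : 1 ≤ n) (Z u : Fin n → ℝ)
    (hZ : Monotone Z) :
    (∀ i j : Fin n, 0 ≤ (Z i - Z j) * (isoMedProj n Z u i - isoMedProj n Z u j)) ∧
    (∃ (m : ℕ) (b : Fin (m + 1) → ℕ) (r : Fin m → ℝ),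
      b 0 = 0 ∧ b (Fin.last m) = n ∧ StrictMono b ∧ StrictMono r ∧
      ∀ (t : Fin m) (i : Fin n),
        b t.castSucc ≤ (i : ℕ) → (i : ℕ) < b t.succ → isoMedProj n Z u i = r t) ∧
    (∀ (m : ℕ) (b : Fin (m + 1) → ℕ) (r : Fin m → ℝ),
      b 0 = 0 → b (Fin.last m) = n → StrictMono b → StrictMono r →
      (∀ (t : Fin m) (i : Fin n),
        b t.castSucc ≤ (i : ℕ) → (i : ℕ) < b t.succ → isoMedProj n Z u i = r t) →
      ∀ t : Fin m,
        (r t = med (((List.finRange n).filter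
            fun ℓ : Fin n => decide (b t.castSucc ≤ (ℓ : ℕ) ∧ (ℓ : ℕ) < b t.succ)).map u)) ∧
        ∀ (i st en : Fin n),
          b t.castSucc ≤ (i : ℕ) → (i : ℕ) < b t.succ →
          (st : ℕ) = b t.castSucc → (en : ℕ) + 1 = b t.succ →
          r t ≤ subMed n Z u (Z st) (Z i) ∧ subMed n Z u (Z i) (Z en) ≤ r t) := by
  refine ⟨?_, MedAux.exists_blocks hn hZ, ?_⟩
  · intro i j
    rcases le_total (Z j) (Z i) with h | h
    · have h2 := MedAux.iso_mono n Z u h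
      exact mul_nonneg (by linarith) (by linarith)
    · have h2 := MedAux.iso_mono n Z u h
      have ha : Z i - Z j ≤ 0 := by linarith
      have hb : isoMedProj n Z u i - isoMedProj n Z u j ≤ 0 := by linarith
      nlinarith [mul_nonneg (neg_nonneg.mpr ha) (neg_nonneg.mpr hb)]
  · intro m b r hb0 hblast hbmono hrmono hval t
    have hle : b t.succ ≤ n := by
      have := hbmono.monotone (Fin.le_last t.succ)
      omega
    have hcs : b t.castSucc < b t.succ := hbmono (Fin.castSucc_lt_succ (i := t))
    constructor
    · -- part (a)
      obtain ⟨st, hst⟩ : ∃ x : Fin n, (x : ℕ) = b t.castSucc := ⟨⟨_, by omega⟩, rfl⟩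
      obtain ⟨en, hen⟩ : ∃ x : Fin n, (x : ℕ) = b t.succ - 1 := ⟨⟨_, by omega⟩, rfl⟩
      have hL := MedAux.main_left hZ hb0 hblast hbmono hrmono hval (en : ℕ) en t st rfl
        (by omega) (by omega) hst
      have hR := MedAux.main_right hZ hb0 hblast hbmono hrmono hval
        (b t.succ - (st : ℕ)) st t en rfl (by omega) (by omega) (by omega)
      have heq : r t = subMed n Z u (Z st) (Z en) := le_antisymm hL hR
      rw [heq, subMed]
      congr 2
      apply List.filter_congr
      intro ℓ _
      apply decide_eq_decide.mpr
      constructor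
      · intro ⟨hz1, hz2⟩
        constructor
        · by_contra hc
          push_neg at hc
          obtain ⟨τ, hτ1, hτ2⟩ := MedAux.blockOf hb0 hblast hbmono ℓ
          have hblk : b τ.succ ≤ (st : ℕ) := by
            have := MedAux.succ_le_of_blocks hbmono
              (show b τ.castSucc < b t.castSucc by omega)
            omega
          have := MedAux.block_sep hZ hb0 hblast hbmono hrmono hval τ hτ2 hblk
          linarith
        · by_contra hc
          push_neg at hc
          have := MedAux.block_sep hZ hb0 hblast hbmono hrmono hval t
            (show (en : ℕ) < b t.succ by omega) hc
          linarith
      · intro ⟨h1, h2⟩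
        exact ⟨MedAux.Zle hZ (by omega), MedAux.Zle hZ (by omega)⟩
    · intro i st en h1 h2 hst hen
      exact ⟨MedAux.main_left hZ hb0 hblast hbmono hrmono hval (i : ℕ) i t st rfl h1 h2 hst,
        MedAux.main_right hZ hb0 hblast hbmono hrmono hval (b t.succ - (i : ℕ)) i t en rfl
          h1 h2 hen⟩

end
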